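/- Correctness of the backward pass of the parallel two-filter smoother: under the linear-Gaussian model assumptions, the suffix products a_{k+1} ⊗ a_{k+2} ⊗ ⋯ ⊗ a_T of the filtering elements under the filtering operator are well defined for every k = 1, …, T−1, and the η-component of a_{k+1} ⊗ ⋯ ⊗ a_T equals η_{k|k+1:T} and its J-component equals J_{k|k+1:T}, where η and J are given by the backward information filter recursion; moreover each J_{k|k+1:T} is symmetric positive semidefinite. -/

import Mathlib

open Matrix

/-- A filtering element over `ℝⁿ`. -/
structure FilteringElem (n : ℕ) where
  A : Matrix (Fin n) (Fin n) ℝ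
  b : Fin n → ℝ
  C : Matrix (Fin n) (Fin n) ℝ
  η : Fin n → ℝ
  J : Matrix (Fin n) (Fin n) ℝ

/-- The filtering operator `⊗` on filtering elements. -/
noncomputable def filterOp {n : ℕ} (x y : FilteringElem n) : FilteringElem n where
  A := y.A * (1 + x.C * y.J)⁻¹ * x.A
  b := (y.A * (1 + x.C * y.J)⁻¹) *ᵥ (x.b + x.C *ᵥ y.η) + y.b
  C := y.A * (1 + x.C * y.J)⁻¹ * x.C * y.Aᵀ + y.C
  η := (x.Aᵀ * (1 + y.J * x.C)⁻¹) *ᵥ (y.η - y.J *ᵥ x.b) + x.η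
  J := x.Aᵀ * (1 + y.J * x.C)⁻¹ * y.J * x.A + x.J

/-- The data of a linear-Gaussian state-space model. -/
structure LGModel (n m : ℕ) where
  T : ℕ
  F : ℕ → Matrix (Fin n) (Fin n) ℝ
  H : ℕ → Matrix (Fin m) (Fin n) ℝ
  u : ℕ → Fin n → ℝ
  d : ℕ → Fin m → ℝ
  Q : ℕ → Matrix (Fin n) (Fin n) ℝ
  R : ℕ → Matrix (Fin m) (Fin m) ℝ
  y : ℕ → Fin m → ℝ
  x0 : Fin n → ℝ
  P0 : Matrix (Fin n) (Fin n) ℝ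

variable {n m : ℕ}

/-- The filtering element `a_k = (A_k, b_k, C_k, η_k, J_k)` for `k > 1` (only such
elements occur in the suffix products `a_{k+1} ⊗ ⋯ ⊗ a_T` with `k ≥ 1`). -/
noncomputable def LGModel.elem (M : LGModel n m) (k : ℕ) : FilteringElem n :=
  let S := M.H k * M.Q (k - 1) * (M.H k)ᵀ + M.R k
  let K := M.Q (k - 1) * (M.H k)ᵀ * S⁻¹
  { A := (1 - K * M.H k) * M.F (k - 1)
    b := M.u (k - 1) + K *ᵥ (M.y k - M.H k *ᵥ M.u (k - 1) - M.d k)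
    C := (1 - K * M.H k) * M.Q (k - 1)
    η := ((M.F (k - 1))ᵀ * (M.H k)ᵀ * S⁻¹) *ᵥ (M.y k - M.H k *ᵥ M.u (k - 1) - M.d k)
    J := (M.F (k - 1))ᵀ * (M.H k)ᵀ * S⁻¹ * M.H k * M.F (k - 1) }

/-- The suffix products of the filtering elements under the filtering operator:
`fsuff M j = a_{T-j} ⊗ a_{T-j+1} ⊗ ⋯ ⊗ a_T`. -/
noncomputable def LGModel.fsuff (M : LGModel n m) : ℕ → FilteringElem n
  | 0 => M.elem M.T
  | j + 1 => filterOp (M.elem (M.T - j - 1)) (LGModel.fsuff M j)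

/-- The backward information filter recursion (updated quantities):
`bif M j = (η_{T-j|T-j:T}, J_{T-j|T-j:T})`, starting from
`η_{T|T:T} = H_Tᵀ R_T⁻¹ (y_T - d_T)`, `J_{T|T:T} = H_Tᵀ R_T⁻¹ H_T` and alternating the
backward prediction and update steps. -/
noncomputable def LGModel.bif (M : LGModel n m) : ℕ → (Fin n → ℝ) × Matrix (Fin n) (Fin n) ℝ
  | 0 => (((M.H M.T)ᵀ * (M.R M.T)⁻¹) *ᵥ (M.y M.T - M.d M.T),
          (M.H M.T)ᵀ * (M.R M.T)⁻¹ * M.H M.T)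
  | j + 1 =>
    let k := M.T - j - 1
    let prev := LGModel.bif M j
    let G := (M.F k)ᵀ * (1 + prev.2 * M.Q k)⁻¹
    (G *ᵥ (prev.1 - prev.2 *ᵥ M.u k) + ((M.H k)ᵀ * (M.R k)⁻¹) *ᵥ (M.y k - M.d k),
     G * prev.2 * M.F k + (M.H k)ᵀ * (M.R k)⁻¹ * M.H k)

/-- The predicted backward information quantities
`(η_{k|k+1:T}, J_{k|k+1:T})`, obtained by the backward prediction step from
`(η_{k+1|k+1:T}, J_{k+1|k+1:T})`. -/
noncomputable def LGModel.bpred (M : LGModel n m) (k : ℕ) :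
    (Fin n → ℝ) × Matrix (Fin n) (Fin n) ℝ :=
  let prev := M.bif (M.T - k - 1)
  let G := (M.F k)ᵀ * (1 + prev.2 * M.Q k)⁻¹
  (G *ᵥ (prev.1 - prev.2 *ᵥ M.u k), G * prev.2 * M.F k)

namespace TFAux
variable {n m : ℕ}

lemma psd_symm {A : Matrix (Fin n) (Fin n) ℝ} (hA : A.PosSemidef) : Aᵀ = A := by
  rw [← conjTranspose_eq_transpose_of_trivial]; exact hA.1

lemma isUnit_one_add_psd_mul {A B : Matrix (Fin n) (Fin n) ℝ}
    (hA : A.PosSemidef) (hB : B.PosSemidef) : IsUnit (1 + A * B) := by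
  rw [← Matrix.mulVec_injective_iff_isUnit]
  have key : ∀ z, (1 + A * B) *ᵥ z = 0 → z = 0 := by
    intro z hz
    rw [add_mulVec, one_mulVec] at hz
    have hw : z ⬝ᵥ (B *ᵥ z) + ((A * B) *ᵥ z) ⬝ᵥ (B *ᵥ z) = 0 := by
      rw [← add_dotProduct, hz, zero_dotProduct]
    have h1 : 0 ≤ z ⬝ᵥ (B *ᵥ z) := by simpa using hB.dotProduct_mulVec_nonneg z
    have h2 : 0 ≤ ((A * B) *ᵥ z) ⬝ᵥ (B *ᵥ z) := by
      rw [← mulVec_mulVec, dotProduct_comm]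
      simpa using hA.dotProduct_mulVec_nonneg (B *ᵥ z)
    have hz1 : z ⬝ᵥ (B *ᵥ z) = 0 := by linarith
    have hBz : B *ᵥ z = 0 := by
      have := (hB.dotProduct_mulVec_zero_iff z).mp (by simpa using hz1)
      exact this
    have : z + (A * B) *ᵥ z = 0 := hz
    rw [← mulVec_mulVec, hBz, mulVec_zero, add_zero] at this
    exact this
  intro x y hxy
  have : (1 + A * B) *ᵥ (x - y) = 0 := by
    rw [mulVec_sub, hxy, sub_self]
  exact sub_eq_zero.mp (key _ this)
lemma push_inv {A B : Matrix (Fin n) (Fin n) ℝ} (h1 : IsUnit (1 + A * B))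
    (h2 : IsUnit (1 + B * A)) : (1 + A * B)⁻¹ * A = A * (1 + B * A)⁻¹ := by
  have h1d := (Matrix.isUnit_iff_isUnit_det _).mp h1
  have h2d := (Matrix.isUnit_iff_isUnit_det _).mp h2
  have e : (1 + A * B) * A = A * (1 + B * A) := by noncomm_ring
  calc (1 + A * B)⁻¹ * A
      = (1 + A * B)⁻¹ * ((1 + A * B) * A * (1 + B * A)⁻¹) := by
        rw [e, mul_assoc, Matrix.mul_nonsing_inv _ h2d, mul_one]
    _ = A * (1 + B * A)⁻¹ := by
        rw [← mul_assoc, ← mul_assoc, Matrix.nonsing_inv_mul _ h1d, one_mul]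

lemma psd_mul_inv_one_add {A B : Matrix (Fin n) (Fin n) ℝ}
    (hA : A.PosSemidef) (hB : B.PosSemidef) : (A * (1 + B * A)⁻¹).PosSemidef := by
  have h1 : IsUnit (1 + A * B) := isUnit_one_add_psd_mul hA hB
  have h2 : IsUnit (1 + B * A) := isUnit_one_add_psd_mul hB hA
  have h2d := (Matrix.isUnit_iff_isUnit_det _).mp h2
  refine Matrix.PosSemidef.of_dotProduct_mulVec_nonneg ?_ ?_
  · show _ᴴ = _
    rw [conjTranspose_eq_transpose_of_trivial, transpose_mul, transpose_nonsing_inv,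
      transpose_add, transpose_one, transpose_mul, psd_symm hA, psd_symm hB,
      push_inv h1 h2]
  · intro x
    set z := (1 + B * A)⁻¹ *ᵥ x with hzdef
    have hx : x = (1 + B * A) *ᵥ z := by
      rw [hzdef, mulVec_mulVec, Matrix.mul_nonsing_inv _ h2d, one_mulVec]
    have hmv : (A * (1 + B * A)⁻¹) *ᵥ x = A *ᵥ z := by rw [← mulVec_mulVec]
    rw [hmv]
    have hsx : star x = x := by funext i; simp
    rw [hsx, hx, add_mulVec, one_mulVec, add_dotProduct]
    have t1 : 0 ≤ z ⬝ᵥ A *ᵥ z := by simpa using hA.dotProduct_mulVec_nonneg z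
    have t2 : 0 ≤ ((B * A) *ᵥ z) ⬝ᵥ A *ᵥ z := by
      rw [← mulVec_mulVec, dotProduct_comm]
      simpa using hB.dotProduct_mulVec_nonneg (A *ᵥ z)
    linarith
lemma vec_step (Fb Eb Xb Mb : Matrix (Fin n) (Fin n) ℝ) (q w : Fin n → ℝ)
    (hm2 : Fb * Eb - Fb * Eb * Xb * Mb = Fb * (Eb * Xb)) :
    (Fb * Eb * Xb) *ᵥ (q - Mb *ᵥ w) + (Fb * Eb) *ᵥ w = (Fb * (Eb * Xb)) *ᵥ (q + w) := by
  have h1 : Fb * Eb * Xb = Fb * (Eb * Xb) := by simp only [Matrix.mul_assoc]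
  have h2 : Fb * Eb - Fb * Eb * Xb * Mb = Fb * Eb * Xb := by rw [hm2, ← h1]
  rw [Matrix.mulVec_sub, Matrix.mulVec_mulVec, Matrix.mulVec_add, ← h1]
  have h3 : (Fb * Eb) *ᵥ w - (Fb * Eb * Xb * Mb) *ᵥ w = (Fb * Eb * Xb) *ᵥ w := by
    rw [← Matrix.sub_mulVec, h2]
  rw [← h3]; abel

lemma core (F Q P : Matrix (Fin n) (Fin n) ℝ) (H : Matrix (Fin m) (Fin n) ℝ)
    (R : Matrix (Fin m) (Fin m) ℝ) (u p : Fin n → ℝ) (z : Fin m → ℝ)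
    (S : Matrix (Fin m) (Fin m) ℝ) (K : Matrix (Fin n) (Fin m) ℝ)
    (A C W : Matrix (Fin n) (Fin n) ℝ)
    (hS : S = H * Q * Hᵀ + R) (hK : K = Q * Hᵀ * S⁻¹)
    (hA : A = (1 - K * H) * F) (hC : C = (1 - K * H) * Q) (hW : W = Hᵀ * R⁻¹ * H)
    (hQ : Q.PosSemidef) (hR : R.PosDef) (hP : P.PosSemidef) :
    IsUnit (1 + C * P) ∧
    Aᵀ * (1 + P * C)⁻¹ * P * A + Fᵀ * Hᵀ * S⁻¹ * H * F
      = Fᵀ * (1 + (P + W) * Q)⁻¹ * (P + W) * F ∧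
    (Aᵀ * (1 + P * C)⁻¹) *ᵥ (p - P *ᵥ (u + K *ᵥ (z - H *ᵥ u)))
        + (Fᵀ * Hᵀ * S⁻¹) *ᵥ (z - H *ᵥ u)
      = (Fᵀ * (1 + (P + W) * Q)⁻¹) *ᵥ (p + (Hᵀ * R⁻¹) *ᵥ z - (P + W) *ᵥ u) ∧
    (Fᵀ * (1 + (P + W) * Q)⁻¹ * (P + W) * F).PosSemidef := by
  have hRd := (Matrix.isUnit_iff_isUnit_det _).mp hR.isUnit
  have hWpsd : W.PosSemidef := by
    rw [hW]
    have := (Matrix.PosDef.posSemidef (Matrix.PosDef.inv hR)).mul_mul_conjTranspose_same Hᵀ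
    simpa [conjTranspose_eq_transpose_of_trivial] using this
  have hSpd : S.PosDef := by
    rw [hS]
    refine Matrix.PosDef.posSemidef_add ?_ hR
    have := hQ.mul_mul_conjTranspose_same H
    simpa [conjTranspose_eq_transpose_of_trivial] using this
  have hSd := (Matrix.isUnit_iff_isUnit_det _).mp hSpd.isUnit
  have hUWQ : IsUnit (1 + W * Q) := isUnit_one_add_psd_mul hWpsd hQ
  have hUQW : IsUnit (1 + Q * W) := isUnit_one_add_psd_mul hQ hWpsd
  have hUWQd := (Matrix.isUnit_iff_isUnit_det _).mp hUWQ
  have hUQWd := (Matrix.isUnit_iff_isUnit_det _).mp hUQW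
  set Et := (1 + W * Q)⁻¹ with hEtdef
  set Ei := (1 + Q * W)⁻¹ with hEidef
  have hEt1 : (1 + W * Q) * Et = 1 := Matrix.mul_nonsing_inv _ hUWQd
  have hEt2 : Et * (1 + W * Q) = 1 := Matrix.nonsing_inv_mul _ hUWQd
  have hEi1 : (1 + Q * W) * Ei = 1 := Matrix.mul_nonsing_inv _ hUQWd
  have hRinv : Hᵀ * R⁻¹ * R = Hᵀ := by
    rw [Matrix.mul_assoc, Matrix.nonsing_inv_mul _ hRd, Matrix.mul_one]
  have e0 : (1 + W * Q) * Hᵀ = Hᵀ * R⁻¹ * S := by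
    rw [hS, hW, Matrix.mul_add, hRinv, Matrix.add_mul, Matrix.one_mul]
    simp only [Matrix.mul_assoc]
    abel
  have key : Hᵀ * S⁻¹ = Et * (Hᵀ * R⁻¹) := by
    have e1 : (1 + W * Q) * (Hᵀ * S⁻¹) = Hᵀ * R⁻¹ := by
      rw [← Matrix.mul_assoc, e0, Matrix.mul_assoc, Matrix.mul_nonsing_inv _ hSd,
        Matrix.mul_one]
    calc Hᵀ * S⁻¹ = Et * ((1 + W * Q) * (Hᵀ * S⁻¹)) := by
          rw [← Matrix.mul_assoc, hEt2, Matrix.one_mul]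
      _ = Et * (Hᵀ * R⁻¹) := by rw [e1]
  have hKH : K * H = Q * (Et * W) := by
    rw [hK, Matrix.mul_assoc Q Hᵀ S⁻¹, key, hW]
    simp only [Matrix.mul_assoc]
  have hCeq : C = Q * Et := by
    have h3 : Et * (W * Q) = 1 - Et := by
      have h := hEt2
      rw [Matrix.mul_add, Matrix.mul_one] at h
      exact eq_sub_of_add_eq' h
    rw [hC, hKH]
    calc (1 - Q * (Et * W)) * Q = Q - Q * (Et * (W * Q)) := by noncomm_ring
      _ = Q - Q * (1 - Et) := by rw [h3]
      _ = Q * Et := by noncomm_ring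
  have hCpsd : C.PosSemidef := by
    rw [hCeq, hEtdef]; exact psd_mul_inv_one_add hQ hWpsd
  have hKC : K = C * (Hᵀ * R⁻¹) := by
    rw [hK, hCeq, Matrix.mul_assoc Q Hᵀ S⁻¹, key]
    simp only [Matrix.mul_assoc]
  have hPW : (P + W).PosSemidef := hP.add hWpsd
  have hUG : IsUnit (1 + (P + W) * Q) := isUnit_one_add_psd_mul hPW hQ
  have hUG' : IsUnit (1 + Q * (P + W)) := isUnit_one_add_psd_mul hQ hPW
  have hUPC : IsUnit (1 + P * C) := isUnit_one_add_psd_mul hP hCpsd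
  have hUPCd := (Matrix.isUnit_iff_isUnit_det _).mp hUPC
  have goal1 : IsUnit (1 + C * P) := isUnit_one_add_psd_mul hCpsd hP
  have hGEt : (1 + (P + W) * Q) * Et = 1 + P * C := by
    calc (1 + (P + W) * Q) * Et = (1 + W * Q) * Et + P * (Q * Et) := by noncomm_ring
      _ = 1 + P * C := by rw [hEt1, hCeq]
  have hGinv : (1 + (P + W) * Q)⁻¹ = Et * (1 + P * C)⁻¹ := by
    apply Matrix.inv_eq_right_inv
    rw [← Matrix.mul_assoc, hGEt, Matrix.mul_nonsing_inv _ hUPCd]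
  have hEiT : Eiᵀ = Et := by
    rw [hEidef, hEtdef, Matrix.transpose_nonsing_inv, transpose_add, transpose_one,
      transpose_mul, psd_symm hQ, psd_symm hWpsd]
  have hKHEi : 1 - K * H = Ei := by
    symm
    apply Matrix.inv_eq_right_inv
    rw [hKH]
    calc (1 + Q * W) * (1 - Q * (Et * W))
        = 1 + Q * W - Q * (((1 + W * Q) * Et) * W) := by noncomm_ring
      _ = 1 := by rw [hEt1]; noncomm_ring
  have hAeq : A = Ei * F := by rw [hA, hKHEi]
  have hAT : Aᵀ = Fᵀ * Et := by rw [hAeq, transpose_mul, hEiT]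
  have hpushWE : Et * W = W * Ei := by
    rw [hEtdef, hEidef]; exact push_inv hUWQ hUQW
  have keyF : Fᵀ * Hᵀ * S⁻¹ = Fᵀ * (Et * (Hᵀ * R⁻¹)) := by
    rw [Matrix.mul_assoc, key]
  have keyF2 : Fᵀ * Hᵀ * S⁻¹ * H = Fᵀ * (Et * W) := by
    rw [keyF, hW]
    simp only [Matrix.mul_assoc]
  have hCW : C * W = Q * (W * Ei) := by
    rw [hCeq, Matrix.mul_assoc, hpushWE]
  have hEiid : P - P * (C * W) = P * Ei := by
    have h4 : Q * (W * Ei) = 1 - Ei := by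
      have h := hEi1
      rw [Matrix.add_mul, Matrix.one_mul] at h
      have h4' := eq_sub_of_add_eq' h
      rw [← Matrix.mul_assoc]
      exact h4'
    rw [hCW, h4]
    noncomm_ring
  have inner : (1 + P * C)⁻¹ * (P * Ei) + W = (1 + P * C)⁻¹ * (P + W) := by
    have h6 : P * (C * W) = P - P * Ei := by rw [← hEiid]; abel
    have h5 : (1 + P * C) * ((1 + P * C)⁻¹ * (P * Ei) + W) = P + W := by
      calc (1 + P * C) * ((1 + P * C)⁻¹ * (P * Ei) + W)
          = ((1 + P * C) * (1 + P * C)⁻¹) * (P * Ei) + W + P * (C * W) := by noncomm_ring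
        _ = 1 * (P * Ei) + W + (P - P * Ei) := by
            rw [Matrix.mul_nonsing_inv _ hUPCd, h6]
        _ = P + W := by noncomm_ring
    calc (1 + P * C)⁻¹ * (P * Ei) + W
        = (1 + P * C)⁻¹ * ((1 + P * C) * ((1 + P * C)⁻¹ * (P * Ei) + W)) := by
          rw [← Matrix.mul_assoc ((1 + P * C)⁻¹) (1 + P * C)
            ((1 + P * C)⁻¹ * (P * Ei) + W), Matrix.nonsing_inv_mul _ hUPCd, Matrix.one_mul]
      _ = (1 + P * C)⁻¹ * (P + W) := by rw [h5]
  refine ⟨goal1, ?_, ?_, ?_⟩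
  · -- J identity
    rw [hAT, hAeq, keyF2, hGinv]
    calc Fᵀ * Et * (1 + P * C)⁻¹ * P * (Ei * F) + Fᵀ * (Et * W) * F
        = Fᵀ * (Et * ((1 + P * C)⁻¹ * (P * Ei) + W)) * F := by noncomm_ring
      _ = Fᵀ * (Et * ((1 + P * C)⁻¹ * (P + W))) * F := by rw [inner]
      _ = Fᵀ * (Et * (1 + P * C)⁻¹) * (P + W) * F := by noncomm_ring
  · -- η identity
    have hKv : K *ᵥ (z - H *ᵥ u) = C *ᵥ ((Hᵀ * R⁻¹) *ᵥ (z - H *ᵥ u)) := by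
      rw [hKC, ← Matrix.mulVec_mulVec]
    have hvec1 : p - P *ᵥ (u + K *ᵥ (z - H *ᵥ u))
        = (p - P *ᵥ u) - (P * C) *ᵥ ((Hᵀ * R⁻¹) *ᵥ (z - H *ᵥ u)) := by
      rw [hKv, Matrix.mulVec_add, Matrix.mulVec_mulVec]
      abel
    have hRHSvec : p + (Hᵀ * R⁻¹) *ᵥ z - (P + W) *ᵥ u
        = (p - P *ᵥ u) + (Hᵀ * R⁻¹) *ᵥ (z - H *ᵥ u) := by
      rw [hW, Matrix.add_mulVec, Matrix.mulVec_sub, ← Matrix.mulVec_mulVec u (Hᵀ * R⁻¹) H]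
      abel
    have hw : (Fᵀ * Hᵀ * S⁻¹) *ᵥ (z - H *ᵥ u)
        = (Fᵀ * Et) *ᵥ ((Hᵀ * R⁻¹) *ᵥ (z - H *ᵥ u)) := by
      rw [keyF, Matrix.mulVec_mulVec, Matrix.mul_assoc]
    have hm2 : Fᵀ * Et - Fᵀ * Et * (1 + P * C)⁻¹ * (P * C) = Fᵀ * (Et * (1 + P * C)⁻¹) := by
      have hX : (1 : Matrix (Fin n) (Fin n) ℝ) - (1 + P * C)⁻¹ * (P * C) = (1 + P * C)⁻¹ := by
        have h7 := Matrix.nonsing_inv_mul _ hUPCd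
        calc (1 : Matrix (Fin n) (Fin n) ℝ) - (1 + P * C)⁻¹ * (P * C)
            = (1 + P * C)⁻¹ * (1 + P * C) - (1 + P * C)⁻¹ * (P * C) := by rw [h7]
          _ = (1 + P * C)⁻¹ := by noncomm_ring
      calc Fᵀ * Et - Fᵀ * Et * (1 + P * C)⁻¹ * (P * C)
          = Fᵀ * (Et * (1 - (1 + P * C)⁻¹ * (P * C))) := by noncomm_ring
        _ = Fᵀ * (Et * (1 + P * C)⁻¹) := by rw [hX]
    rw [hAT, hGinv, hvec1, hRHSvec, hw]
    exact vec_step Fᵀ Et (1 + P * C)⁻¹ (P * C) (p - P *ᵥ u)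
      ((Hᵀ * R⁻¹) *ᵥ (z - H *ᵥ u)) hm2
  · -- PSD
    have hmid : ((1 + (P + W) * Q)⁻¹ * (P + W)).PosSemidef := by
      rw [push_inv hUG hUG']
      exact psd_mul_inv_one_add hPW hQ
    have := hmid.conjTranspose_mul_mul_same F
    simpa only [conjTranspose_eq_transpose_of_trivial, Matrix.mul_assoc] using this
end TFAux

namespace TFAux

lemma aux (M : LGModel n m)
    (hQ : ∀ k, k < M.T → (M.Q k).PosSemidef)
    (hR : ∀ k, 1 ≤ k → k ≤ M.T → (M.R k).PosDef) :
    ∀ j, j + 2 ≤ M.T →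
      (M.fsuff j).η = (M.bpred (M.T - j - 1)).1 ∧
      (M.fsuff j).J = (M.bpred (M.T - j - 1)).2 ∧
      ((M.bpred (M.T - j - 1)).2).PosSemidef := by
  intro j
  induction j with
  | zero =>
    intro hj
    obtain ⟨-, hJ, hη, hPSD⟩ := core (M.F (M.T - 1)) (M.Q (M.T - 1)) 0 (M.H M.T) (M.R M.T)
      (M.u (M.T - 1)) 0 (M.y M.T - M.d M.T) _ _ _ _ _ rfl rfl rfl rfl rfl
      (hQ _ (by omega)) (hR _ (by omega) le_rfl) Matrix.PosSemidef.zero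
    simp only [Matrix.zero_mul, Matrix.mul_zero, zero_add, add_zero, Matrix.zero_mulVec,
      Matrix.mulVec_zero, zero_sub, sub_zero, neg_zero] at hJ hη hPSD
    have e0 : M.T - (M.T - 1) - 1 = 0 := by omega
    simp only [LGModel.fsuff, LGModel.bpred, Nat.sub_zero, e0, LGModel.bif, LGModel.elem]
    have hv : M.y M.T - M.H M.T *ᵥ M.u (M.T - 1) - M.d M.T
        = (M.y M.T - M.d M.T) - M.H M.T *ᵥ M.u (M.T - 1) := sub_right_comm _ _ _
    refine ⟨?_, ?_, ?_⟩
    · rw [hv]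
      exact hη
    · exact hJ
    · exact hPSD
  | succ j ih =>
    intro hj
    obtain ⟨ihη, ihJ, ihP⟩ := ih (by omega)
    have e1 : M.T - (j + 1) - 1 = M.T - j - 1 - 1 := by omega
    have e2 : M.T - (M.T - j - 1 - 1) - 1 = j + 1 := by omega
    have e3 : M.T - (M.T - j - 1) - 1 = j := by omega
    -- bif (j+1) in terms of bpred (M.T - j - 1)
    have hb1 : (M.bif (j + 1)).1 = (M.bpred (M.T - j - 1)).1
        + ((M.H (M.T - j - 1))ᵀ * (M.R (M.T - j - 1))⁻¹) *ᵥ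
            (M.y (M.T - j - 1) - M.d (M.T - j - 1)) := by
      simp only [LGModel.bif, LGModel.bpred, e3]
    have hb2 : (M.bif (j + 1)).2 = (M.bpred (M.T - j - 1)).2
        + (M.H (M.T - j - 1))ᵀ * (M.R (M.T - j - 1))⁻¹ * M.H (M.T - j - 1) := by
      simp only [LGModel.bif, LGModel.bpred, e3]
    obtain ⟨-, hJ, hη, hPSD⟩ := core (M.F (M.T - j - 1 - 1)) (M.Q (M.T - j - 1 - 1))
      ((M.bpred (M.T - j - 1)).2) (M.H (M.T - j - 1)) (M.R (M.T - j - 1))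
      (M.u (M.T - j - 1 - 1)) ((M.bpred (M.T - j - 1)).1)
      (M.y (M.T - j - 1) - M.d (M.T - j - 1)) _ _ _ _ _ rfl rfl rfl rfl rfl
      (hQ _ (by omega)) (hR _ (by omega) (by omega)) ihP
    have hv : M.y (M.T - j - 1) - M.H (M.T - j - 1) *ᵥ M.u (M.T - j - 1 - 1) - M.d (M.T - j - 1)
        = (M.y (M.T - j - 1) - M.d (M.T - j - 1))
          - M.H (M.T - j - 1) *ᵥ M.u (M.T - j - 1 - 1) := sub_right_comm _ _ _
    refine ⟨?_, ?_, ?_⟩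
    · show (filterOp (M.elem (M.T - j - 1)) (M.fsuff j)).η = _
      simp only [filterOp, LGModel.elem, LGModel.bpred, e1, e2, hb1, hb2, ihη, ihJ]
      rw [hv]
      exact hη
    · show (filterOp (M.elem (M.T - j - 1)) (M.fsuff j)).J = _
      simp only [filterOp, LGModel.elem, LGModel.bpred, e1, e2, hb1, hb2, ihJ]
      exact hJ
    · simp only [LGModel.bpred, e1, e2, hb1, hb2]
      exact hPSD

end TFAux

/-- Correctness of the backward pass of the parallel two-filter smoother: under the
linear-Gaussian model assumptions, the suffix products `a_{k+1} ⊗ ⋯ ⊗ a_T` of the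
filtering elements are well defined (the matrices `I + C·J` appearing in the
successive applications of the filtering operator are invertible) for every
`k = 1, …, T-1`, the `η`-component of `a_{k+1} ⊗ ⋯ ⊗ a_T` equals `η_{k|k+1:T}` and
its `J`-component equals `J_{k|k+1:T}` from the backward information filter recursion,
and each `J_{k|k+1:T}` is symmetric positive semidefinite. -/
theorem two_filter_backward_pass_correct (M : LGModel n m) (hT : 1 ≤ M.T)
    (hQ : ∀ k, k < M.T → (M.Q k).PosSemidef)
    (hR : ∀ k, 1 ≤ k → k ≤ M.T → (M.R k).PosDef)
    (hP0 : M.P0.PosSemidef) :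
    (∀ k, 2 ≤ k → k ≤ M.T - 1 →
      IsUnit (1 + (M.elem k).C * (M.fsuff (M.T - k - 1)).J)) ∧
    (∀ k, 1 ≤ k → k ≤ M.T - 1 →
      (M.fsuff (M.T - k - 1)).η = (M.bpred k).1 ∧
      (M.fsuff (M.T - k - 1)).J = (M.bpred k).2 ∧
      ((M.bpred k).2).PosSemidef) := by

  have key : ∀ k, 1 ≤ k → k ≤ M.T - 1 →
      (M.fsuff (M.T - k - 1)).η = (M.bpred k).1 ∧
      (M.fsuff (M.T - k - 1)).J = (M.bpred k).2 ∧
      ((M.bpred k).2).PosSemidef := by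
    intro k hk1 hk2
    have hT2 : 2 ≤ M.T := by omega
    have e : M.T - (M.T - k - 1) - 1 = k := by omega
    have := TFAux.aux M hQ hR (M.T - k - 1) (by omega)
    rwa [e] at this
  refine ⟨?_, key⟩
  intro k hk1 hk2
  obtain ⟨-, hJ, hPSD⟩ := key k (by omega) hk2
  rw [hJ]
  obtain ⟨h1, -, -, -⟩ := TFAux.core (M.F (k - 1)) (M.Q (k - 1)) ((M.bpred k).2)
    (M.H k) (M.R k) (M.u (k - 1)) ((M.bpred k).1) (M.y k - M.d k) _ _ _ _ _
    rfl rfl rfl rfl rfl (hQ _ (by omega)) (hR _ (by omega) (by omega)) hPSD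
  exact h1
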